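/- Let L₀ be the lattice in ℝ⁴ generated by ℤ⁴ together with (1/2,1/2,0,0), (0,0,1/2,1/2), (1/4,1/4,1/4,1/4), and (1/4,−1/4,0,1/2). Then the number of vectors in L₀ of ℓ¹-norm exactly 1 equals 36. -/
import Mathlib

def l1 {n : ℕ} (x : Fin n → ℝ) : ℝ := ∑ i, |x i|

/-- Integer vectors in `ℝ⁴`. -/
def Zlat4 : Set (Fin 4 → ℝ) := {x | ∀ i, ∃ m : ℤ, x i = (m : ℝ)}

/-- The lattice `L₀` generated by `ℤ⁴`, `(1/2,1/2,0,0)`, `(0,0,1/2,1/2)`,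
`(1/4,1/4,1/4,1/4)` and `(1/4,-1/4,0,1/2)`. -/
def L0 : AddSubgroup (Fin 4 → ℝ) :=
  AddSubgroup.closure (Zlat4 ∪
    {![1/2, 1/2, 0, 0], ![0, 0, 1/2, 1/2], ![1/4, 1/4, 1/4, 1/4], ![1/4, -1/4, 0, 1/2]})

/-- Explicit description of `L0`: quarter-integer vectors `m/4` with
`m₀ + m₁ + 2 m₃ ≡ 0` and `2 m₁ + m₂ + m₃ ≡ 0 (mod 4)`. -/
def Msub : AddSubgroup (Fin 4 → ℝ) where
  carrier := {x | ∃ m : Fin 4 → ℤ, (∀ i, x i = (m i : ℝ)/4) ∧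
    (4 ∣ (m 0 + m 1 + 2*m 3)) ∧ (4 ∣ (2*m 1 + m 2 + m 3))}
  zero_mem' := ⟨0, fun i => by simp, by simp, by simp⟩
  add_mem' := by
    rintro x y ⟨m, hm, h1, h2⟩ ⟨m', hm', h1', h2'⟩
    exact ⟨m + m', fun i => by simp [hm i, hm' i]; ring, by simp only [Pi.add_apply]; omega,
      by simp only [Pi.add_apply]; omega⟩
  neg_mem' := by
    rintro x ⟨m, hm, h1, h2⟩
    exact ⟨-m, fun i => by simp [hm i]; ring, by simp only [Pi.neg_apply]; omega,
      by simp only [Pi.neg_apply]; omega⟩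

lemma L0_le : L0 ≤ Msub := by
  rw [L0, AddSubgroup.closure_le]
  rintro x (hx | hx)
  · choose k hk using hx
    exact ⟨fun i => 4 * k i, fun i => by rw [hk i]; push_cast; ring, ⟨k 0 + k 1 + 2*k 3, by ring⟩,
      ⟨2*k 1 + k 2 + k 3, by ring⟩⟩
  · simp only [Set.mem_insert_iff, Set.mem_singleton_iff] at hx
    rcases hx with rfl | rfl | rfl | rfl
    · exact ⟨![2,2,0,0], fun i => by fin_cases i <;> norm_num, by decide, by decide⟩
    · exact ⟨![0,0,2,2], fun i => by fin_cases i <;> norm_num, by decide, by decide⟩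
    · exact ⟨![1,1,1,1], fun i => by fin_cases i <;> norm_num, by decide, by decide⟩
    · exact ⟨![1,-1,0,2], fun i => by fin_cases i <;> norm_num, by decide, by decide⟩

lemma mem_L0_of_dvd (m : Fin 4 → ℤ) (h1 : 4 ∣ (m 0 + m 1 + 2*m 3)) (h2 : 4 ∣ (2*m 1 + m 2 + m 3)) :
    (fun i => (m i : ℝ)/4) ∈ L0 := by
  have hg2 : ![0, 0, 1/2, 1/2] ∈ L0 := AddSubgroup.subset_closure (Or.inr (by simp))
  have hg3 : ![1/4, 1/4, 1/4, 1/4] ∈ L0 := AddSubgroup.subset_closure (Or.inr (by simp))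
  have hg4 : ![1/4, -1/4, 0, 1/2] ∈ L0 := AddSubgroup.subset_closure (Or.inr (by simp))
  have he4 : ![0, 0, 0, (1:ℝ)] ∈ L0 := AddSubgroup.subset_closure
    (Or.inl (fun i => by
      fin_cases i <;> [exact ⟨0, by norm_num⟩; exact ⟨0, by norm_num⟩; exact ⟨0, by norm_num⟩;
        exact ⟨1, by norm_num⟩]))
  obtain ⟨a, b, c, d, e0, e1, e2, e3⟩ : ∃ a b c d : ℤ,
      m 0 = a ∧ m 1 = a + 2*b ∧ m 2 = a + b + 2*c ∧ m 3 = a - b + 2*c + 4*d :=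
    ⟨m 0, (m 1 - m 0)/2, (2*m 2 - m 0 - m 1)/4,
      (m 3 - m 0 + (m 1 - m 0)/2 - (2*m 2 - m 0 - m 1)/2)/4, by omega, by omega, by omega, by omega⟩
  have key : (fun i => (m i : ℝ)/4) =
      a • ![1/4, 1/4, 1/4, 1/4] + b • (![1/4, 1/4, 1/4, 1/4] - ![1/4, -1/4, 0, 1/2])
        + c • ![0, 0, 1/2, 1/2] + d • ![0, 0, 0, (1:ℝ)] := by
    funext i
    fin_cases i <;>
      simp [e0, e1, e2, e3, Pi.smul_apply, zsmul_eq_mul] <;> push_cast <;> ring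
  rw [key]
  exact add_mem (add_mem (add_mem (zsmul_mem hg3 a) (zsmul_mem (sub_mem hg3 hg4) b))
    (zsmul_mem hg2 c)) (zsmul_mem he4 d)

/-- The 36 integer vectors `m` (with `x = m/4`) of `ℓ¹`-norm `4` in the scaled lattice. -/
def T : Finset (Fin 4 → ℤ) := {![-4, 0, 0, 0], ![-2, -2, 0, 0], ![-2, 0, -1, 1], ![-2, 0, 1, -1], ![-2, 2, 0, 0], ![-1, -1, -1, -1], ![-1, -1, 1, 1], ![-1, 1, -2, 0], ![-1, 1, 0, -2], ![-1, 1, 0, 2], ![-1, 1, 2, 0], ![0, -4, 0, 0], ![0, -2, -1, 1], ![0, -2, 1, -1], ![0, 0, -4, 0], ![0, 0, -2, -2], ![0, 0, -2, 2], ![0, 0, 0, -4], ![0, 0, 0, 4], ![0, 0, 2, -2], ![0, 0, 2, 2], ![0, 0, 4, 0], ![0, 2, -1, 1], ![0, 2, 1, -1], ![0, 4, 0, 0], ![1, -1, -2, 0], ![1, -1, 0, -2], ![1, -1, 0, 2], ![1, -1, 2, 0], ![1, 1, -1, -1], ![1, 1, 1, 1], ![2, -2, 0, 0], ![2, 0,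 -1, 1], ![2, 0, 1, -1], ![2, 2, 0, 0], ![4, 0, 0, 0]}

set_option maxRecDepth 10000 in
lemma cls : ∀ a ∈ Finset.Icc (-4:ℤ) 4, ∀ b ∈ Finset.Icc (-4:ℤ) 4, ∀ c ∈ Finset.Icc (-4:ℤ) 4,
    ∀ d ∈ Finset.Icc (-4:ℤ) 4, 4 ∣ (a + b + 2*d) → 4 ∣ (2*b + c + d) →
    |a| + |b| + |c| + |d| = 4 → ![a,b,c,d] ∈ T := by decide

set_option maxRecDepth 10000 in
lemma T_props : ∀ m ∈ T, (4 ∣ (m 0 + m 1 + 2*m 3)) ∧ (4 ∣ (2*m 1 + m 2 + m 3)) ∧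
    |m 0| + |m 1| + |m 2| + |m 3| = 4 := by decide

theorem stmt12 : Set.ncard {x : Fin 4 → ℝ | x ∈ L0 ∧ l1 x = 1} = 36 := by
  have hinj : Function.Injective (fun m : Fin 4 → ℤ => fun i => (m i : ℝ)/4) := by
    intro m m' h
    funext i
    have h' := congrFun h i
    field_simp at h'
    exact_mod_cast h'
  have hset : {x : Fin 4 → ℝ | x ∈ L0 ∧ l1 x = 1}
      = ↑(T.image fun m : Fin 4 → ℤ => fun i => (m i : ℝ)/4) := by
    ext x
    simp only [Set.mem_setOf_eq, Finset.coe_image, Set.mem_image, Finset.mem_coe]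
    constructor
    · rintro ⟨hxL, hl⟩
      obtain ⟨m, hm, h1, h2⟩ := L0_le hxL
      have habs : |m 0| + |m 1| + |m 2| + |m 3| = 4 := by
        have hsum := hl
        simp only [l1, Fin.sum_univ_four, hm 0, hm 1, hm 2, hm 3, abs_div] at hsum
        rw [show |(4:ℝ)| = 4 by norm_num] at hsum
        have : ((|m 0| + |m 1| + |m 2| + |m 3| : ℤ) : ℝ) = 4 := by push_cast; linarith
        exact_mod_cast this
      have hb0 := le_abs_self (m 0); have hb0' := neg_abs_le (m 0)
      have hb1 := le_abs_self (m 1); have hb1' := neg_abs_le (m 1)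
      have hb2 := le_abs_self (m 2); have hb2' := neg_abs_le (m 2)
      have hb3 := le_abs_self (m 3); have hb3' := neg_abs_le (m 3)
      have ha0 := abs_nonneg (m 0); have ha1 := abs_nonneg (m 1)
      have ha2 := abs_nonneg (m 2); have ha3 := abs_nonneg (m 3)
      have hmem := cls (m 0) (Finset.mem_Icc.2 (by omega)) (m 1) (Finset.mem_Icc.2 (by omega))
        (m 2) (Finset.mem_Icc.2 (by omega)) (m 3) (Finset.mem_Icc.2 (by omega)) h1 h2 habs
      have hme : ![m 0, m 1, m 2, m 3] = m := by
        funext i; fin_cases i <;> rfl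
      rw [hme] at hmem
      exact ⟨m, hmem, funext fun i => (hm i).symm⟩
    · rintro ⟨m, hmT, rfl⟩
      obtain ⟨d1, d2, d3⟩ := T_props m hmT
      refine ⟨mem_L0_of_dvd m d1 d2, ?_⟩
      have : ((|m 0| + |m 1| + |m 2| + |m 3| : ℤ) : ℝ) = 4 := by rw [d3]; norm_num
      push_cast at this
      simp only [l1, Fin.sum_univ_four, abs_div]
      rw [show |(4:ℝ)| = 4 by norm_num]
      linarith
  rw [hset, Set.ncard_coe_finset, Finset.card_image_of_injective _ hinj]
  decide
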